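/- arXiv:2101.01350 — 5 statements merged into one kernel-verified Lean document; each statement's English description precedes it below -/
import Mathlib

section
/- Let p ∈ (0,1], weights w_i ≥ 0, γ > 0, and y ∈ ℝ^n with ∑_i w_i |y_i|^p > γ. If x* is a global minimizer of (1/2)‖x − y‖₂² subject to ∑_i w_i |x_i|^p ≤ γ, then for every i, x*_i y_i ≥ 0. -/
open Finset

theorem stmt_0 (n : ℕ) (p : ℝ) (hp0 : 0 < p) (hp1 : p ≤ 1)
    (w : Fin n → ℝ) (hw : ∀ i, 0 ≤ w i) (γ : ℝ) (hγ : 0 < γ)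
    (y xstar : Fin n → ℝ)
    (hy : γ < ∑ i, w i * |y i| ^ p)
    (hfeas : ∑ i, w i * |xstar i| ^ p ≤ γ)
    (hmin : ∀ x : Fin n → ℝ, ∑ i, w i * |x i| ^ p ≤ γ →
      (1/2) * ∑ i, (xstar i - y i) ^ 2 ≤ (1/2) * ∑ i, (x i - y i) ^ 2) :
    ∀ i, 0 ≤ xstar i * y i := by
  intro i
  by_contra hneg
  push_neg at hneg
  set x' : Fin n → ℝ := Function.update xstar i (-xstar i) with hx'
  have habs : ∀ j, |x' j| = |xstar j| := by
    intro j
    by_cases h : j = i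
    · subst h; simp [hx', abs_neg]
    · simp [hx', Function.update_of_ne h]
  have hfeas' : ∑ j, w j * |x' j| ^ p ≤ γ := by
    calc ∑ j, w j * |x' j| ^ p = ∑ j, w j * |xstar j| ^ p := by
          exact Finset.sum_congr rfl (fun j _ => by rw [habs])
      _ ≤ γ := hfeas
  have hlt : ∑ j, (x' j - y j) ^ 2 < ∑ j, (xstar j - y j) ^ 2 := by
    apply Finset.sum_lt_sum
    · intro j _
      by_cases h : j = i
      · subst h
        simp only [hx', Function.update_self]
        nlinarith [hneg]
      · simp [hx', Function.update_of_ne h]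
    · exact ⟨i, Finset.mem_univ i, by
        simp only [hx', Function.update_self]
        nlinarith [hneg]⟩
  have := hmin x' hfeas'
  linarith
end

section
/- Let p ∈ (0,1], weights w_i ≥ 0, γ > 0, and y ∈ ℝ^n with ∑_i w_i |y_i|^p > γ. If x* is a global minimizer of (1/2)‖x − y‖₂² subject to ∑_i w_i |x_i|^p ≤ γ, then the vector |x*| (componentwise absolute value) is a global minimizer of (1/2)‖x − |y|‖₂² over x ∈ ℝ^n_{+} subject to ∑_i w_i x_i^p ≤ γ. -/
open Finset

theorem stmt_2 (n : ℕ) (p : ℝ) (hp0 : 0 < p) (hp1 : p ≤ 1)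
    (w : Fin n → ℝ) (hw : ∀ i, 0 ≤ w i) (γ : ℝ) (hγ : 0 < γ)
    (y xstar : Fin n → ℝ)
    (hy : γ < ∑ i, w i * |y i| ^ p)
    (hfeas : ∑ i, w i * |xstar i| ^ p ≤ γ)
    (hmin : ∀ x : Fin n → ℝ, ∑ i, w i * |x i| ^ p ≤ γ →
      (1/2) * ∑ i, (xstar i - y i) ^ 2 ≤ (1/2) * ∑ i, (x i - y i) ^ 2) :
    ((∀ i, 0 ≤ |xstar i|) ∧ ∑ i, w i * |xstar i| ^ p ≤ γ) ∧
    (∀ x : Fin n → ℝ, (∀ i, 0 ≤ x i) → ∑ i, w i * (x i) ^ p ≤ γ →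
      (1/2) * ∑ i, (|xstar i| - |y i|) ^ 2 ≤ (1/2) * ∑ i, (x i - |y i|) ^ 2) := by
  refine ⟨⟨fun i => abs_nonneg _, hfeas⟩, fun x hx hxf => ?_⟩
  set x' : Fin n → ℝ := fun i => if 0 ≤ y i then x i else -x i with hx'
  have habs : ∀ i, |x' i| = x i := by
    intro i
    simp only [hx']
    split_ifs <;> simp [abs_of_nonneg (hx i)]
  have hfeas' : ∑ i, w i * |x' i| ^ p ≤ γ := by
    simpa [habs] using hxf
  have h1 : (1/2 : ℝ) * ∑ i, (|xstar i| - |y i|) ^ 2 ≤ (1/2) * ∑ i, (xstar i - y i) ^ 2 := by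
    gcongr (1/2) * ?_
    apply Finset.sum_le_sum
    intro i _
    nlinarith [sq_abs (xstar i), sq_abs (y i), le_abs_self (xstar i * y i), abs_mul (xstar i) (y i)]
  have h2 : ∑ i, (x' i - y i) ^ 2 = ∑ i, (x i - |y i|) ^ 2 := by
    apply Finset.sum_congr rfl
    intro i _
    simp only [hx']
    split_ifs with h
    · rw [abs_of_nonneg h]
    · rw [abs_of_neg (lt_of_not_ge h)]; ring
  calc (1/2 : ℝ) * ∑ i, (|xstar i| - |y i|) ^ 2 ≤ (1/2) * ∑ i, (xstar i - y i) ^ 2 := h1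
    _ ≤ (1/2) * ∑ i, (x' i - y i) ^ 2 := hmin x' hfeas'
    _ = (1/2) * ∑ i, (x i - |y i|) ^ 2 := by rw [h2]
end

section
/- Let 0 < p < 1, γ > 0, ε ∈ ℝ^n_{++}, and x ∈ ℝ^n_{+} with ∑_i (x_i + ε_i)^p ≤ γ. Suppose x' ∈ ℝ^n_{+} satisfies the linearized constraint ∑_i (x_i + ε_i)^p + ∑_i p(x_i + ε_i)^{p−1}(x'_i − x_i) ≤ γ, and let ε' ∈ ℝ^n with 0 < ε'_i ≤ ε_i for all i. Then ∑_i (x'_i + ε'_i)^p ≤ γ. -/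
open Finset

lemma tangent_rpow {p a b : ℝ} (hp0 : 0 < p) (hp1 : p < 1) (ha : 0 < a) (hb : 0 ≤ b) :
    b ^ p ≤ a ^ p + p * a ^ (p - 1) * (b - a) := by
  have hs : (-1 : ℝ) ≤ b / a - 1 := by
    have : 0 ≤ b / a := div_nonneg hb ha.le
    linarith
  have key := rpow_one_add_le_one_add_mul_self hs hp0.le hp1.le
  have hb' : b = a * (1 + (b / a - 1)) := by field_simp; ring
  have h1 : 0 ≤ 1 + (b / a - 1) := by linarith
  calc b ^ p = (a * (1 + (b / a - 1))) ^ p := by rw [← hb']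
    _ = a ^ p * (1 + (b / a - 1)) ^ p := Real.mul_rpow ha.le h1
    _ ≤ a ^ p * (1 + p * (b / a - 1)) := by
        apply mul_le_mul_of_nonneg_left key (Real.rpow_nonneg ha.le p)
    _ = a ^ p + p * a ^ (p - 1) * (b - a) := by
        rw [Real.rpow_sub ha, Real.rpow_one]
        field_simp

theorem stmt_7 (n : ℕ) (p γ : ℝ) (hp0 : 0 < p) (hp1 : p < 1) (hγ : 0 < γ)
    (ε x : Fin n → ℝ) (hε : ∀ i, 0 < ε i) (hx : ∀ i, 0 ≤ x i)
    (hfeas : ∑ i, (x i + ε i) ^ p ≤ γ)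
    (x' : Fin n → ℝ) (hx' : ∀ i, 0 ≤ x' i)
    (hlin : ∑ i, (x i + ε i) ^ p + ∑ i, p * (x i + ε i) ^ (p - 1) * (x' i - x i) ≤ γ)
    (ε' : Fin n → ℝ) (hε' : ∀ i, 0 < ε' i ∧ ε' i ≤ ε i) :
    ∑ i, (x' i + ε' i) ^ p ≤ γ := by
  have step : ∀ i, (x' i + ε' i) ^ p ≤
      (x i + ε i) ^ p + p * (x i + ε i) ^ (p - 1) * (x' i - x i) := fun i => by
    have h1 : (x' i + ε' i) ^ p ≤ (x' i + ε i) ^ p := by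
      apply Real.rpow_le_rpow (by have := (hε' i).1; linarith [hx' i]) _ hp0.le
      linarith [(hε' i).2]
    have h2 := tangent_rpow hp0 hp1 (by linarith [hx i, hε i] : (0:ℝ) < x i + ε i)
      (by linarith [hx' i, (hε i).le] : (0:ℝ) ≤ x' i + ε i)
    have : (x i + ε i) ^ p + p * (x i + ε i) ^ (p - 1) * ((x' i + ε i) - (x i + ε i))
        = (x i + ε i) ^ p + p * (x i + ε i) ^ (p - 1) * (x' i - x i) := by ring
    linarith [this ▸ h2]
  calc ∑ i, (x' i + ε' i) ^ p
      ≤ ∑ i, ((x i + ε i) ^ p + p * (x i + ε i) ^ (p - 1) * (x' i - x i)) :=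
        Finset.sum_le_sum fun i _ => step i
    _ = ∑ i, (x i + ε i) ^ p + ∑ i, p * (x i + ε i) ^ (p - 1) * (x' i - x i) :=
        Finset.sum_add_distrib
    _ ≤ γ := hlin
end

section
/- Let 0 < p < 1, ε ∈ ℝ^n_{++}, λ ≥ 0, and let x ∈ ℝ^n satisfy 0 ≤ x_i ≤ ȳ_i for all i where ȳ ∈ ℝ^n_{+}. Define α(x,λ) = ∑_i |(ȳ_i − x_i)x_i − λ p x_i^p| and α_ε(x,λ) = ∑_i |(ȳ_i − x_i)x_i − λ p (x_i + ε_i)^{p−1} x_i|. Then |α(x,λ) − α_ε(x,λ)| ≤ λ p ∑_i ε_i^p. -/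
open Finset

lemma aux_key (p : ℝ) (hp0 : 0 < p) (hp1 : p < 1) (x e : ℝ) (hx : 0 ≤ x) (he : 0 < e) :
    |x ^ p - (x + e) ^ (p - 1) * x| ≤ e ^ p := by
  have hxe : 0 < x + e := by linarith
  have hupper : x ^ p - (x + e) ^ (p - 1) * x ≤ e ^ p := by
    have h1 : x ^ p ≤ (x + e) ^ p := Real.rpow_le_rpow hx (by linarith) hp0.le
    have h2 : (x + e) ^ p = (x + e) ^ (p - 1) * (x + e) := by
      rw [Real.rpow_sub hxe, Real.rpow_one]
      field_simp
    have h3 : (x + e) ^ (p - 1) ≤ e ^ (p - 1) :=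
      Real.rpow_le_rpow_of_nonpos he (by linarith) (by linarith)
    have h4 : e ^ (p - 1) * e = e ^ p := by
      rw [Real.rpow_sub he, Real.rpow_one]; field_simp
    nlinarith [Real.rpow_nonneg hxe.le (p - 1), Real.rpow_nonneg he.le (p - 1)]
  have hlower : 0 ≤ x ^ p - (x + e) ^ (p - 1) * x := by
    rcases eq_or_lt_of_le hx with h | h
    · simp [← h, Real.zero_rpow hp0.ne']
    · have h3 : (x + e) ^ (p - 1) ≤ x ^ (p - 1) :=
        Real.rpow_le_rpow_of_nonpos h (by linarith) (by linarith)
      have h4 : x ^ (p - 1) * x = x ^ p := by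
        rw [Real.rpow_sub h, Real.rpow_one]; field_simp
      nlinarith
  rw [abs_of_nonneg hlower]
  exact hupper

theorem stmt_9 (n : ℕ) (p : ℝ) (hp0 : 0 < p) (hp1 : p < 1)
    (ε : Fin n → ℝ) (hε : ∀ i, 0 < ε i)
    (lam : ℝ) (hlam : 0 ≤ lam)
    (ybar x : Fin n → ℝ) (hybar : ∀ i, 0 ≤ ybar i)
    (hx : ∀ i, 0 ≤ x i ∧ x i ≤ ybar i) :
    |(∑ i, |(ybar i - x i) * x i - lam * p * (x i) ^ p|) -
     (∑ i, |(ybar i - x i) * x i - lam * p * (x i + ε i) ^ (p - 1) * x i|)| ≤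
      lam * p * ∑ i, (ε i) ^ p := by
  rw [← Finset.sum_sub_distrib, Finset.mul_sum]
  refine (Finset.abs_sum_le_sum_abs _ _).trans (Finset.sum_le_sum fun i _ => ?_)
  have h1 := abs_abs_sub_abs_le_abs_sub
    ((ybar i - x i) * x i - lam * p * (x i) ^ p)
    ((ybar i - x i) * x i - lam * p * (x i + ε i) ^ (p - 1) * x i)
  refine h1.trans ?_
  have h2 : (ybar i - x i) * x i - lam * p * (x i) ^ p -
      ((ybar i - x i) * x i - lam * p * (x i + ε i) ^ (p - 1) * x i) =
      -(lam * p) * ((x i) ^ p - (x i + ε i) ^ (p - 1) * x i) := by ring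
  rw [h2, abs_mul, abs_neg, abs_of_nonneg (by positivity)]
  exact mul_le_mul_of_nonneg_left (aux_key p hp0 hp1 _ _ (hx i).1 (hε i)) (by positivity)
end

section
/- Let 0 < p < 1, λ ≥ 0, ε ∈ ℝ^n_{++}, ȳ ∈ ℝ^n_{+}, and suppose x, x⁻ ∈ ℝ^n_{+} satisfy 0 ≤ x_i ≤ ȳ_i for all i and the subproblem optimality condition ȳ_i − x_i = λ p (x⁻_i + ε_i)^{p−1} whenever x_i > 0, with ȳ_i − x_i = 0 implied for x_i = 0 in the definition below. Define α_ε(x,λ) = ∑_i |(ȳ_i − x_i)x_i − λ p (x_i + ε_i)^{p−1} x_i|. Then α_ε(x,λ) ≤ λ p (1−p) ‖ȳ‖₂ ‖ε^{p−2}‖₂ ‖x⁻ − x‖₂, where ε^{p−2} denotes the vector with entries ε_i^{p−2}. -/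
open Finset

lemma aux_mvt_15 (p : ℝ) (hp0 : 0 < p) (hp1 : p < 1) (c a b : ℝ)
    (hc : 0 < c) (ha : c ≤ a) (hb : c ≤ b) :
    |a ^ (p-1) - b ^ (p-1)| ≤ (1 - p) * c ^ (p-2) * |a - b| := by
  have hconv : Convex ℝ (Set.Ici c) := convex_Ici c
  have hder : ∀ t ∈ Set.Ici c, HasDerivWithinAt (fun s : ℝ => s ^ (p-1))
      ((p-1) * t ^ (p-2)) (Set.Ici c) t := by
    intro t ht
    have ht0 : t ≠ 0 := by have := lt_of_lt_of_le hc ht; positivity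
    have := (Real.hasDerivAt_rpow_const (p := p-1) (Or.inl ht0)).hasDerivWithinAt
      (s := Set.Ici c)
    have e : p - 1 - 1 = p - 2 := by ring
    rw [e] at this
    exact this
  have hbound : ∀ t ∈ Set.Ici c, ‖(p-1) * t ^ (p-2)‖ ≤ (1-p) * c ^ (p-2) := by
    intro t ht
    have ht0 : 0 < t := lt_of_lt_of_le hc ht
    have h1 : t ^ (p-2) ≤ c ^ (p-2) :=
      Real.rpow_le_rpow_of_nonpos hc ht (by linarith)
    have h2 : (0:ℝ) ≤ t ^ (p-2) := Real.rpow_nonneg ht0.le _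
    rw [norm_mul, Real.norm_eq_abs, Real.norm_eq_abs, abs_of_nonpos (by linarith),
      abs_of_nonneg h2]
    nlinarith
  have := hconv.norm_image_sub_le_of_norm_hasDerivWithin_le hder hbound hb ha
  simpa [Real.norm_eq_abs] using this

lemma aux_cs_15 {n : ℕ} (f g : Fin n → ℝ) :
    ∑ i, f i * g i ≤ Real.sqrt (∑ i, f i ^ 2) * Real.sqrt (∑ i, g i ^ 2) := by
  have h := Finset.sum_mul_sq_le_sq_mul_sq Finset.univ f g
  calc ∑ i, f i * g i ≤ |∑ i, f i * g i| := le_abs_self _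
    _ = Real.sqrt ((∑ i, f i * g i) ^ 2) := (Real.sqrt_sq_eq_abs _).symm
    _ ≤ Real.sqrt ((∑ i, f i ^ 2) * ∑ i, g i ^ 2) := Real.sqrt_le_sqrt h
    _ = _ := Real.sqrt_mul (by positivity) _

theorem stmt_15 (n : ℕ) (p : ℝ) (hp0 : 0 < p) (hp1 : p < 1)
    (lam : ℝ) (hlam : 0 ≤ lam)
    (ε ybar x xm : Fin n → ℝ)
    (hε : ∀ i, 0 < ε i) (hybar : ∀ i, 0 ≤ ybar i)
    (hx : ∀ i, 0 ≤ x i ∧ x i ≤ ybar i) (hxm : ∀ i, 0 ≤ xm i)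
    (hopt : ∀ i, 0 < x i → ybar i - x i = lam * p * (xm i + ε i) ^ (p - 1)) :
    ∑ i, |(ybar i - x i) * x i - lam * p * (x i + ε i) ^ (p - 1) * x i| ≤
      lam * p * (1 - p) * Real.sqrt (∑ i, (ybar i) ^ 2) *
        Real.sqrt (∑ i, ((ε i) ^ (p - 2)) ^ 2) *
        Real.sqrt (∑ i, (xm i - x i) ^ 2) := by
  -- per-index bound
  have key : ∀ i, |(ybar i - x i) * x i - lam * p * (x i + ε i) ^ (p - 1) * x i| ≤
      lam * p * (1 - p) * (ybar i * ((ε i) ^ (p-2) * |xm i - x i|)) := by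
    intro i
    have h1p : (0:ℝ) ≤ 1 - p := by linarith
    have hA : (0:ℝ) ≤ lam * p * (1 - p) := mul_nonneg (mul_nonneg hlam hp0.le) h1p
    have hε2 : (0:ℝ) ≤ (ε i) ^ (p-2) := Real.rpow_nonneg (hε i).le _
    rcases eq_or_lt_of_le (hx i).1 with h0 | h0
    · rw [← h0]
      simp
      exact mul_nonneg hA (mul_nonneg (hybar i) (mul_nonneg hε2 (abs_nonneg _)))
    · rw [hopt i h0]
      have e1 : lam * p * (xm i + ε i) ^ (p - 1) * x i -
          lam * p * (x i + ε i) ^ (p - 1) * x i =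
          lam * p * x i * ((xm i + ε i) ^ (p-1) - (x i + ε i) ^ (p-1)) := by ring
      rw [e1, abs_mul]
      have hmvt := aux_mvt_15 p hp0 hp1 (ε i) (xm i + ε i) (x i + ε i) (hε i)
        (by linarith [hxm i]) (by linarith [(hx i).1])
      have hdiff : |(xm i + ε i) - (x i + ε i)| = |xm i - x i| := by ring_nf
      rw [hdiff] at hmvt
      have habs : |lam * p * x i| = lam * p * x i := by
        rw [abs_of_nonneg]; positivity
      rw [habs]
      have hxle : x i ≤ ybar i := (hx i).2
      have h3 : lam * p * x i * |(xm i + ε i) ^ (p-1) - (x i + ε i) ^ (p-1)| ≤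
          lam * p * x i * ((1-p) * (ε i) ^ (p-2) * |xm i - x i|) := by
        apply mul_le_mul_of_nonneg_left hmvt (by positivity)
      calc lam * p * x i * |(xm i + ε i) ^ (p-1) - (x i + ε i) ^ (p-1)|
          ≤ lam * p * x i * ((1-p) * (ε i) ^ (p-2) * |xm i - x i|) := h3
        _ ≤ lam * p * ybar i * ((1-p) * (ε i) ^ (p-2) * |xm i - x i|) := by
            apply mul_le_mul_of_nonneg_right _
              (mul_nonneg (mul_nonneg h1p hε2) (abs_nonneg _))
            nlinarith [mul_le_mul_of_nonneg_left hxle (mul_nonneg hlam hp0.le)]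
        _ = lam * p * (1 - p) * (ybar i * ((ε i) ^ (p-2) * |xm i - x i|)) := by ring
  calc ∑ i, |(ybar i - x i) * x i - lam * p * (x i + ε i) ^ (p - 1) * x i|
      ≤ ∑ i, lam * p * (1 - p) * (ybar i * ((ε i) ^ (p-2) * |xm i - x i|)) :=
        Finset.sum_le_sum fun i _ => key i
    _ = lam * p * (1 - p) * ∑ i, ybar i * ((ε i) ^ (p-2) * |xm i - x i|) := by
        rw [Finset.mul_sum]
    _ ≤ lam * p * (1 - p) * (Real.sqrt (∑ i, (ybar i) ^ 2) *
          Real.sqrt (∑ i, ((ε i) ^ (p-2) * |xm i - x i|) ^ 2)) := by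
        apply mul_le_mul_of_nonneg_left (aux_cs_15 _ _)
          (mul_nonneg (mul_nonneg hlam hp0.le) (by linarith))
    _ ≤ lam * p * (1 - p) * (Real.sqrt (∑ i, (ybar i) ^ 2) *
          (Real.sqrt (∑ i, ((ε i) ^ (p-2)) ^ 2) * Real.sqrt (∑ i, (xm i - x i) ^ 2))) := by
        apply mul_le_mul_of_nonneg_left _
          (mul_nonneg (mul_nonneg hlam hp0.le) (by linarith))
        apply mul_le_mul_of_nonneg_left _ (Real.sqrt_nonneg _)
        rw [← Real.sqrt_mul (by positivity)]
        apply Real.sqrt_le_sqrt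
        calc ∑ i, ((ε i) ^ (p-2) * |xm i - x i|) ^ 2
            = ∑ i, ((ε i) ^ (p-2)) ^ 2 * (xm i - x i) ^ 2 := by
              apply Finset.sum_congr rfl; intro i _
              rw [mul_pow, sq_abs]
          _ ≤ ∑ i, ((ε i) ^ (p-2)) ^ 2 * (∑ j, (xm j - x j) ^ 2) := by
              apply Finset.sum_le_sum; intro i _
              apply mul_le_mul_of_nonneg_left _ (by positivity)
              exact Finset.single_le_sum (fun j _ => sq_nonneg (xm j - x j)) (Finset.mem_univ i)
          _ = (∑ i, ((ε i) ^ (p-2)) ^ 2) * ∑ j, (xm j - x j) ^ 2 := by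
              rw [← Finset.sum_mul]
    _ = _ := by ring
end
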